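/- Under these assumptions, the functions P_0,…,P_{n−1} and Q_0,…,Q_{n−1} form a biorthogonal system on (0,∞): for all 0 ≤ j, k ≤ n−1 the integral ∫₀^∞ P_j(x) Q_k(x) dx converges absolutely and equals δ_{j,k} (1 if j = k and 0 otherwise). -/

import Mathlib

open MeasureTheory Set

lemma aux_sub_int {h : ℝ → ℝ} (hh : IntegrableOn h (Ioi 0)) {t : ℝ} (ht : 0 < t) :
    IntegrableOn (fun x => h (x / t)) (Ioi 0) := by
  have := (integrableOn_Ioi_comp_mul_right_iff h 0 (inv_pos.mpr ht)).mpr (by simpa using hh)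
  simpa [div_eq_mul_inv] using this

lemma aux_sub_eq (h : ℝ → ℝ) {t : ℝ} (ht : 0 < t) :
    ∫ x in Ioi (0:ℝ), h (x / t) = t * ∫ u in Ioi (0:ℝ), h u := by
  have := integral_comp_mul_right_Ioi h 0 (inv_pos.mpr ht)
  simp only [zero_mul, smul_eq_mul, inv_inv] at this
  simpa [div_eq_mul_inv] using this

lemma aux_key (φ qk : ℝ → ℝ) (hφmeas : Measurable φ)
    (hφnonneg : ∀ t ∈ Ioi (0:ℝ), 0 ≤ φ t) (i : ℕ)
    (hφi : IntegrableOn (fun t => t ^ i * φ t) (Ioi 0))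
    (hqmeas : Measurable qk)
    (hqi : IntegrableOn (fun x => x ^ i * |qk x|) (Ioi 0))
    (Qf : ℝ → ℝ)
    (hQf : ∀ y ∈ Ioi (0:ℝ), Qf y = ∫ t in Ioi (0:ℝ), φ t * qk (y / t) / t) :
    IntegrableOn (fun x => x ^ i * Qf x) (Ioi 0) ∧
    ∫ x in Ioi (0:ℝ), x ^ i * Qf x
      = (∫ t in Ioi (0:ℝ), t ^ i * φ t) * ∫ u in Ioi (0:ℝ), u ^ i * qk u := by
  set ν := volume.restrict (Ioi (0:ℝ)) with hν
  set g : ℝ → ℝ := fun u => u ^ i * qk u with hg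
  set ga : ℝ → ℝ := fun u => u ^ i * |qk u| with hga
  have hgmeas : Measurable g := (measurable_id.pow_const i).mul hqmeas
  have hgint : IntegrableOn g (Ioi 0) := by
    refine hqi.mono' (hgmeas.aestronglyMeasurable.restrict) ?_
    filter_upwards [ae_restrict_mem measurableSet_Ioi] with x hx
    have hx0 : (0:ℝ) < x := hx
    have : ‖g x‖ = ga x := by
      simp [hg, hga, abs_mul, abs_pow, abs_of_nonneg hx0.le]
    exact this.le
  set f : ℝ → ℝ → ℝ := fun t x => x ^ i * (φ t * qk (x / t) / t) with hf
  have hFmeas : Measurable (Function.uncurry f) := by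
    apply (measurable_snd.pow_const i).mul
    exact ((hφmeas.comp measurable_fst).mul
      (hqmeas.comp (measurable_snd.div measurable_fst))).div measurable_fst
  -- pointwise identity
  have hpt : ∀ t : ℝ, 0 < t → ∀ x : ℝ, f t x = (φ t * t ^ i / t) * g (x / t) := by
    intro t ht x
    have ht' : t ≠ 0 := ht.ne'
    simp only [hf, hg]
    field_simp
    rw [div_pow]
    field_simp
  have hpta : ∀ t : ℝ, 0 < t → ∀ x : ℝ, 0 < x → |f t x| = (φ t * t ^ i / t) * ga (x / t) := by
    intro t ht x hx
    rw [hpt t ht x]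
    have h1 : 0 ≤ φ t * t ^ i / t :=
      div_nonneg (mul_nonneg (hφnonneg t ht) (pow_nonneg ht.le i)) ht.le
    have h2 : 0 < x / t := div_pos hx ht
    simp [hg, hga, abs_mul, abs_of_nonneg h1, abs_of_nonneg (pow_nonneg h2.le i)]
  -- slice integrability
  have hslice : ∀ t ∈ Ioi (0:ℝ), Integrable (fun x => f t x) ν := by
    intro t ht
    have : IntegrableOn (fun x => (φ t * t ^ i / t) * g (x / t)) (Ioi 0) :=
      (aux_sub_int hgint ht).const_mul _
    exact this.congr_fun (fun x _ => (hpt t ht x).symm) measurableSet_Ioi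
  -- norm integral
  set C : ℝ := ∫ u in Ioi (0:ℝ), ga u with hC
  have hnormval : ∀ t ∈ Ioi (0:ℝ), (∫ x in Ioi (0:ℝ), ‖f t x‖) = t ^ i * φ t * C := by
    intro t ht
    have ht0 : (0:ℝ) < t := ht
    have : (∫ x in Ioi (0:ℝ), ‖f t x‖)
        = ∫ x in Ioi (0:ℝ), (φ t * t ^ i / t) * ga (x / t) := by
      refine setIntegral_congr_fun measurableSet_Ioi (fun x hx => ?_)
      exact (hpta t ht0 x hx)
    rw [this, integral_const_mul, aux_sub_eq ga ht0]
    field_simp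
    ring
  have hnormint : Integrable (fun t => ∫ x, ‖f t x‖ ∂ν) ν := by
    have : Integrable (fun t => t ^ i * φ t * C) ν := hφi.mul_const C
    refine this.congr ?_
    filter_upwards [ae_restrict_mem measurableSet_Ioi] with t ht
    exact (hnormval t ht).symm
  have hFint : Integrable (Function.uncurry f) (ν.prod ν) := by
    refine (integrable_prod_iff hFmeas.aestronglyMeasurable).mpr ⟨?_, hnormint⟩
    filter_upwards [ae_restrict_mem measurableSet_Ioi] with t ht
    exact hslice t ht
  -- x^i * Qf x = ∫ t, f t x  on Ioi 0
  have hQeq : ∀ x ∈ Ioi (0:ℝ), x ^ i * Qf x = ∫ t, f t x ∂ν := by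
    intro x hx
    rw [hQf x hx, ← integral_const_mul]
  constructor
  · refine (hFint.integral_prod_right).congr ?_
    filter_upwards [ae_restrict_mem measurableSet_Ioi] with x hx
    exact (hQeq x hx).symm
  · have h1 : ∫ x in Ioi (0:ℝ), x ^ i * Qf x = ∫ x, ∫ t, f t x ∂ν ∂ν := by
      refine setIntegral_congr_fun measurableSet_Ioi (fun x hx => hQeq x hx)
    rw [h1, ← integral_integral_swap hFint]
    have h2 : ∫ t, ∫ x, f t x ∂ν ∂ν
        = ∫ t in Ioi (0:ℝ), t ^ i * φ t * ∫ u in Ioi (0:ℝ), g u := by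
      refine setIntegral_congr_fun measurableSet_Ioi (fun t ht => ?_)
      have ht0 : (0:ℝ) < t := ht
      have : (∫ x, f t x ∂ν) = ∫ x in Ioi (0:ℝ), (φ t * t ^ i / t) * g (x / t) :=
        setIntegral_congr_fun measurableSet_Ioi (fun x _ => hpt t ht0 x)
      rw [this, integral_const_mul, aux_sub_eq g ht0]
      field_simp
    rw [h2, integral_mul_const]


lemma aux_gint {qk : ℝ → ℝ} (hqmeas : Measurable qk) {i : ℕ}
    (hqi : IntegrableOn (fun x => x ^ i * |qk x|) (Ioi 0)) :
    IntegrableOn (fun u => u ^ i * qk u) (Ioi 0) := by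
  refine hqi.mono' (((measurable_id.pow_const i).mul hqmeas).aestronglyMeasurable.restrict) ?_
  filter_upwards [ae_restrict_mem measurableSet_Ioi] with x hx
  have hx0 : (0:ℝ) < x := hx
  have : ‖x ^ i * qk x‖ = x ^ i * |qk x| := by
    simp [abs_mul, abs_pow, abs_of_nonneg hx0.le]
  exact this.le


/-- Biorthogonality of the transformed system `(P_k, Q_k)` obtained from a
biorthogonal system `(p_k, q_k)` on `(0,∞)` by the Mellin-convolution
transformation with a nonnegative weight `φ` with finite nonzero moments. -/
theorem stmt0
    (n : ℕ) (hn : 1 ≤ n)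
    (φ : ℝ → ℝ) (hφmeas : Measurable φ) (hφnonneg : ∀ t ∈ Ioi (0:ℝ), 0 ≤ φ t)
    (hφmom : ∀ j < n, IntegrableOn (fun t => t ^ j * φ t) (Ioi 0))
    (hφpos : ∀ j < n, 0 < ∫ t in Ioi (0:ℝ), t ^ j * φ t)
    (b : ℕ → ℝ) (hb : ∀ j < n, b j = (∫ t in Ioi (0:ℝ), t ^ j * φ t)⁻¹)
    (a : ℕ → ℕ → ℝ) (ha : ∀ k < n, a k k ≠ 0)
    (p : ℕ → ℝ → ℝ)
    (hp : ∀ k < n, ∀ x : ℝ, p k x = ∑ j ∈ Finset.range (k + 1), a j k * x ^ j)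
    (q : ℕ → ℝ → ℝ) (hqmeas : ∀ k < n, Measurable (q k))
    (hqint : ∀ k < n, ∀ j < n, IntegrableOn (fun x => x ^ j * |q k x|) (Ioi 0))
    (hbiorth : ∀ j < n, ∀ k < n,
      ∫ x in Ioi (0:ℝ), p j x * q k x = if j = k then 1 else 0)
    (P : ℕ → ℝ → ℝ)
    (hP : ∀ k < n, ∀ x : ℝ, P k x = ∑ j ∈ Finset.range (k + 1), a j k * b j * x ^ j)
    (Q : ℕ → ℝ → ℝ)
    (hQ : ∀ k < n, ∀ y ∈ Ioi (0:ℝ), Q k y = ∫ t in Ioi (0:ℝ), φ t * q k (y / t) / t) :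
    ∀ j < n, ∀ k < n,
      IntegrableOn (fun x => P j x * Q k x) (Ioi 0) ∧
      ∫ x in Ioi (0:ℝ), P j x * Q k x = if j = k then 1 else 0 := by
  intro j hj k hk
  have hkey : ∀ i, i < n →
      IntegrableOn (fun x => x ^ i * Q k x) (Ioi 0) ∧
      ∫ x in Ioi (0:ℝ), x ^ i * Q k x
        = (∫ t in Ioi (0:ℝ), t ^ i * φ t) * ∫ u in Ioi (0:ℝ), u ^ i * q k u :=
    fun i hi => aux_key φ (q k) hφmeas hφnonneg i (hφmom i hi) (hqmeas k hk)
      (hqint k hk i hi) (Q k) (hQ k hk)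
  have hin : ∀ i ∈ Finset.range (j + 1), i < n :=
    fun i hi => lt_of_le_of_lt (Nat.lt_succ_iff.mp (Finset.mem_range.mp hi)) hj
  have hPQ : ∀ x : ℝ, P j x * Q k x
      = ∑ i ∈ Finset.range (j + 1), (a i j * b i) * (x ^ i * Q k x) := by
    intro x
    rw [hP j hj x, Finset.sum_mul]
    exact Finset.sum_congr rfl (fun i _ => by ring)
  have hint : IntegrableOn
      (fun x => ∑ i ∈ Finset.range (j + 1), (a i j * b i) * (x ^ i * Q k x)) (Ioi 0) :=
    integrable_finset_sum _ (fun i hi => ((hkey i (hin i hi)).1.const_mul _))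
  constructor
  · exact hint.congr_fun (fun x _ => (hPQ x).symm) measurableSet_Ioi
  · calc ∫ x in Ioi (0:ℝ), P j x * Q k x
        = ∫ x in Ioi (0:ℝ), ∑ i ∈ Finset.range (j + 1),
            (a i j * b i) * (x ^ i * Q k x) :=
          setIntegral_congr_fun measurableSet_Ioi (fun x _ => hPQ x)
      _ = ∑ i ∈ Finset.range (j + 1),
            ∫ x in Ioi (0:ℝ), (a i j * b i) * (x ^ i * Q k x) :=
          integral_finset_sum _ (fun i hi => (hkey i (hin i hi)).1.const_mul _)
      _ = ∑ i ∈ Finset.range (j + 1), a i j * ∫ u in Ioi (0:ℝ), u ^ i * q k u := by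
          refine Finset.sum_congr rfl (fun i hi => ?_)
          rw [integral_const_mul, (hkey i (hin i hi)).2, hb i (hin i hi)]
          have hI := (hφpos i (hin i hi)).ne'
          field_simp
      _ = ∑ i ∈ Finset.range (j + 1), ∫ u in Ioi (0:ℝ), a i j * (u ^ i * q k u) :=
          Finset.sum_congr rfl (fun i hi => (integral_const_mul _ _).symm)
      _ = ∫ u in Ioi (0:ℝ), ∑ i ∈ Finset.range (j + 1), a i j * (u ^ i * q k u) :=
          (integral_finset_sum _ (fun i hi =>
            (aux_gint (hqmeas k hk) (hqint k hk i (hin i hi))).const_mul _)).symm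
      _ = ∫ u in Ioi (0:ℝ), p j u * q k u := by
          refine setIntegral_congr_fun measurableSet_Ioi (fun u _ => ?_)
          rw [hp j hj u, Finset.sum_mul]
          exact Finset.sum_congr rfl (fun i _ => by ring)
      _ = if j = k then 1 else 0 := hbiorth j hj k hk
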